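/- The sequential uniform Vervaat error process satisfies the algebraic identity Q_n(s,t) = A_n(s,t) − d_n^{-2}(R_n*(s,t))², where A_n(s,t) = 2 d_n^{-1}[nt] ∫_{Û_{[nt]}(s)}^{s} (α_n(y,t) − α_n(s,t)) dy. -/

import Mathlib

open Finset intervalIntegral

noncomputable def Ehat (U : ℕ → ℝ) (m : ℕ) (s : ℝ) : ℝ :=
  (∑ i ∈ Finset.range m, if U i ≤ s then (1:ℝ) else 0) / m

noncomputable def Uhat (U : ℕ → ℝ) (m : ℕ) (y : ℝ) : ℝ :=
  sInf {s ∈ Set.Icc (0:ℝ) 1 | y ≤ Ehat U m s}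

open MeasureTheory
open scoped ENNReal

lemma Ehat_mono (U : ℕ → ℝ) (m : ℕ) : Monotone (Ehat U m) := by
  intro x y hxy
  unfold Ehat
  rcases Nat.eq_zero_or_pos m with h | h
  · simp [h]
  · apply div_le_div_of_nonneg_right ?_ (by positivity)
    apply Finset.sum_le_sum
    intro i _
    by_cases hi : U i ≤ x
    · simp [hi, hi.trans hxy]
    · split_ifs <;> norm_num

lemma Ehat_nonneg (U : ℕ → ℝ) (m : ℕ) (x : ℝ) : 0 ≤ Ehat U m x := by
  unfold Ehat
  apply div_nonneg ?_ (by positivity)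
  apply Finset.sum_nonneg
  intro i _
  split_ifs <;> norm_num

lemma Ehat_one (U : ℕ → ℝ) (hU : ∀ i, U i ∈ Set.Icc (0:ℝ) 1) {m : ℕ} (hm : 0 < m)
    {x : ℝ} (hx : 1 ≤ x) : Ehat U m x = 1 := by
  unfold Ehat
  have : ∀ i ∈ Finset.range m, (if U i ≤ x then (1:ℝ) else 0) = 1 := by
    intro i _
    simp [(hU i).2.trans hx]
  rw [Finset.sum_congr rfl this]
  simp
  exact hm.ne'

lemma Uhat_bddBelow (U : ℕ → ℝ) (m : ℕ) (y : ℝ) :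
    BddBelow {s ∈ Set.Icc (0:ℝ) 1 | y ≤ Ehat U m s} :=
  ⟨0, fun x hx => hx.1.1⟩

lemma Uhat_mem_one (U : ℕ → ℝ) (hU : ∀ i, U i ∈ Set.Icc (0:ℝ) 1) {m : ℕ} (hm : 0 < m)
    {y : ℝ} (hy : y ≤ 1) : (1:ℝ) ∈ {s ∈ Set.Icc (0:ℝ) 1 | y ≤ Ehat U m s} := by
  refine ⟨⟨zero_le_one, le_rfl⟩, ?_⟩
  rw [Ehat_one U hU hm le_rfl]
  exact hy

lemma Uhat_nonneg (U : ℕ → ℝ) (m : ℕ) (y : ℝ) : 0 ≤ Uhat U m y :=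
  Real.sInf_nonneg (fun x hx => hx.1.1)

lemma Uhat_le_one (U : ℕ → ℝ) (hU : ∀ i, U i ∈ Set.Icc (0:ℝ) 1) {m : ℕ} (hm : 0 < m)
    {y : ℝ} (hy : y ≤ 1) : Uhat U m y ≤ 1 :=
  csInf_le (Uhat_bddBelow U m y) (Uhat_mem_one U hU hm hy)

lemma Uhat_mono (U : ℕ → ℝ) (hU : ∀ i, U i ∈ Set.Icc (0:ℝ) 1) {m : ℕ} (hm : 0 < m)
    {a b : ℝ} (hab : a ≤ b) (hb : b ≤ 1) : Uhat U m a ≤ Uhat U m b := by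
  apply csInf_le_csInf (Uhat_bddBelow U m a) ⟨1, Uhat_mem_one U hU hm hb⟩
  exact fun x hx => ⟨hx.1, hab.trans hx.2⟩

lemma Ehat_eq_card (U : ℕ → ℝ) (m : ℕ) (x : ℝ) :
    Ehat U m x = ((Finset.range m).filter (fun i => U i ≤ x)).card / m := by
  unfold Ehat
  rw [Finset.sum_boole]

lemma galois (U : ℕ → ℝ) (hU : ∀ i, U i ∈ Set.Icc (0:ℝ) 1) {m : ℕ} (hm : 0 < m)
    {y : ℝ} (hy : y ∈ Set.Icc (0:ℝ) 1) {x : ℝ} (hx : 0 ≤ x) :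
    Uhat U m y ≤ x ↔ y ≤ Ehat U m x := by
  set S := {s ∈ Set.Icc (0:ℝ) 1 | y ≤ Ehat U m s} with hS
  have hSne : (1:ℝ) ∈ S := Uhat_mem_one U hU hm hy.2
  have hbdd := Uhat_bddBelow U m y
  constructor
  · intro h
    have key : y ≤ Ehat U m (Uhat U m y) := by
      by_contra hcon
      push_neg at hcon
      set c := Uhat U m y with hc
      have hstep : ∀ x' ∈ S, ∃ i ∈ Finset.range m, c < U i ∧ U i ≤ x' := by
        intro x' hx'
        have hcx' : c ≤ x' := csInf_le hbdd hx'
        have hEE : Ehat U m c < Ehat U m x' := lt_of_lt_of_le hcon hx'.2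
        have hsub : (Finset.range m).filter (fun i => U i ≤ c) ⊆
            (Finset.range m).filter (fun i => U i ≤ x') := by
          intro i hi
          rw [Finset.mem_filter] at hi ⊢
          exact ⟨hi.1, hi.2.trans hcx'⟩
        have hne : (Finset.range m).filter (fun i => U i ≤ c) ≠
            (Finset.range m).filter (fun i => U i ≤ x') := by
          intro hEq
          rw [Ehat_eq_card, Ehat_eq_card, hEq] at hEE
          exact lt_irrefl _ hEE
        obtain ⟨i, hiT, hiS⟩ := Finset.exists_of_ssubset (hsub.ssubset_of_ne hne)
        rw [Finset.mem_filter] at hiT hiS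
        push_neg at hiS
        exact ⟨i, hiT.1, hiS hiT.1, hiT.2⟩
      set M := (Finset.range m).filter (fun i => c < U i) with hM
      obtain ⟨i0, hi0m, hi0c, _⟩ := hstep 1 hSne
      have hMne : M.Nonempty := ⟨i0, Finset.mem_filter.2 ⟨hi0m, hi0c⟩⟩
      have hlb : ∀ x' ∈ S, M.inf' hMne U ≤ x' := by
        intro x' hx'
        obtain ⟨i, him, hic, hix⟩ := hstep x' hx'
        exact le_trans (Finset.inf'_le U (Finset.mem_filter.2 ⟨him, hic⟩)) hix
      have h1 : M.inf' hMne U ≤ c := le_csInf ⟨1, hSne⟩ hlb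
      have h2 : c < M.inf' hMne U := by
        rw [Finset.lt_inf'_iff]
        intro i hi
        exact (Finset.mem_filter.1 hi).2
      exact absurd h1 (not_le.2 h2)
    exact key.trans (Ehat_mono U m h)
  · intro h
    by_cases hx1 : x ≤ 1
    · exact csInf_le hbdd ⟨⟨hx, hx1⟩, h⟩
    · exact (Uhat_le_one U hU hm hy.2).trans (le_of_not_ge hx1)

lemma young (U : ℕ → ℝ) (hU : ∀ i, U i ∈ Set.Icc (0:ℝ) 1) {m : ℕ} (hm : 0 < m)
    {s : ℝ} (hs : s ∈ Set.Icc (0:ℝ) 1) :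
    ∫ y in (0:ℝ)..s, Uhat U m y
      = s * Uhat U m s - ∫ x in (0:ℝ)..(Uhat U m s), Ehat U m x := by
  set E := Ehat U m with hE
  set Q := Uhat U m with hQ
  set b := Q s with hb
  have hb0 : 0 ≤ b := Uhat_nonneg U m s
  have hEmeas : Measurable E := (Ehat_mono U m).measurable
  -- clamped version of Q
  set Qc : ℝ → ℝ := fun y => Q (max 0 (min y 1)) with hQc
  have hQcmono : Monotone Qc := by
    intro y1 y2 h
    exact Uhat_mono U hU hm (max_le_max le_rfl (min_le_min h le_rfl)) (max_le (zero_le_one) (min_le_right _ _))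
  have hQc_eq : ∀ y ∈ Set.Icc (0:ℝ) 1, Qc y = Q y := by
    intro y hy
    simp only [hQc]
    rw [min_eq_left hy.2, max_eq_right hy.1]
  have hQcmeas : Measurable Qc := hQcmono.measurable
  -- the region
  set A : Set (ℝ × ℝ) := {p | p.1 ∈ Set.Ioc 0 s ∧ 0 ≤ p.2 ∧ E p.2 < p.1} with hA
  have hAmeas : MeasurableSet A := by
    have : A = (Set.Ioc 0 s ×ˢ Set.Ici 0) ∩ {p : ℝ × ℝ | E p.2 < p.1} := by
      ext p
      simp only [hA, Set.mem_inter_iff, Set.mem_prod, Set.mem_setOf_eq, Set.mem_Ici]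
      tauto
    rw [this]
    exact (measurableSet_Ioc.prod measurableSet_Ici).inter
      (measurableSet_lt (hEmeas.comp measurable_snd) measurable_fst)
  -- inner integral in x
  have hinner1 : ∀ y : ℝ, (∫⁻ x, A.indicator 1 (y, x))
      = (Set.Ioc 0 s).indicator (fun y => ENNReal.ofReal (Qc y)) y := by
    intro y
    by_cases hy : y ∈ Set.Ioc 0 s
    · have hy01 : y ∈ Set.Icc (0:ℝ) 1 := ⟨hy.1.le, hy.2.trans hs.2⟩
      have hset : (fun x : ℝ => A.indicator (1 : ℝ × ℝ → ℝ≥0∞) (y, x))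
          = (Set.Ico 0 (Q y)).indicator 1 := by
        funext x
        simp only [hA, Set.indicator_apply, Set.mem_setOf_eq, Set.mem_Ico]
        congr 1
        simp only [eq_iff_iff]
        constructor
        · rintro ⟨_, hx0, hEx⟩
          refine ⟨hx0, ?_⟩
          by_contra hcon
          push_neg at hcon
          exact absurd ((galois U hU hm hy01 hx0).1 hcon) (not_le.2 hEx)
        · rintro ⟨hx0, hxQ⟩
          refine ⟨hy, hx0, ?_⟩
          by_contra hcon
          push_neg at hcon
          exact absurd ((galois U hU hm hy01 hx0).2 hcon) (not_le.2 hxQ)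
      rw [hset, lintegral_indicator_one measurableSet_Ico, Real.volume_Ico,
        Set.indicator_of_mem hy, sub_zero, hQc_eq y hy01]
    · have hzero : (fun x : ℝ => A.indicator (1 : ℝ × ℝ → ℝ≥0∞) (y, x)) = fun _ => 0 := by
        funext x
        apply Set.indicator_of_notMem
        simp only [hA, Set.mem_setOf_eq]
        tauto
      rw [hzero, lintegral_zero, Set.indicator_of_notMem hy]
  -- inner integral in y
  have hinner2 : ∀ x : ℝ, (∫⁻ y, A.indicator 1 (y, x))
      = (Set.Ici 0).indicator (fun x => ENNReal.ofReal (s - E x)) x := by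
    intro x
    by_cases hx : (0:ℝ) ≤ x
    · have hset : (fun y : ℝ => A.indicator (1 : ℝ × ℝ → ℝ≥0∞) (y, x))
          = (Set.Ioc (E x) s).indicator 1 := by
        funext y
        simp only [hA, Set.indicator_apply, Set.mem_setOf_eq, Set.mem_Ioc, Set.mem_Ioc]
        congr 1
        simp only [eq_iff_iff]
        constructor
        · rintro ⟨hy, _, hEx⟩
          exact ⟨hEx, hy.2⟩
        · rintro ⟨hEx, hys⟩
          exact ⟨⟨lt_of_le_of_lt (Ehat_nonneg U m x) hEx, hys⟩, hx, hEx⟩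
      rw [hset, lintegral_indicator_one measurableSet_Ioc, Real.volume_Ioc,
        Set.indicator_of_mem (show x ∈ Set.Ici 0 from hx)]
    · have hzero : (fun y : ℝ => A.indicator (1 : ℝ × ℝ → ℝ≥0∞) (y, x)) = fun _ => 0 := by
        funext y
        apply Set.indicator_of_notMem
        simp only [hA, Set.mem_setOf_eq]
        tauto
      rw [hzero, lintegral_zero, Set.indicator_of_notMem (show x ∉ Set.Ici 0 from hx)]
  -- Fubini
  have hswap : (∫⁻ y, ∫⁻ x, A.indicator 1 (y, x)) = ∫⁻ x, ∫⁻ y, A.indicator 1 (y, x) := by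
    exact lintegral_lintegral_swap ((measurable_one.indicator hAmeas).aemeasurable)
  -- key ENNReal identity
  have hstar : (∫⁻ y in Set.Ioc 0 s, ENNReal.ofReal (Qc y))
      = ∫⁻ x in Set.Ioc 0 b, ENNReal.ofReal (s - E x) := by
    have l1 : (∫⁻ y, ∫⁻ x, A.indicator 1 (y, x))
        = ∫⁻ y in Set.Ioc 0 s, ENNReal.ofReal (Qc y) := by
      rw [lintegral_congr hinner1, lintegral_indicator measurableSet_Ioc]
    have l2 : (∫⁻ x, ∫⁻ y, A.indicator 1 (y, x))
        = ∫⁻ x in Set.Ioc 0 b, ENNReal.ofReal (s - E x) := by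
      rw [lintegral_congr hinner2, lintegral_indicator measurableSet_Ici]
      rw [setLIntegral_congr (Ioi_ae_eq_Ici (a := (0:ℝ))).symm]
      rw [← Set.Ioc_union_Ioi_eq_Ioi hb0,
        lintegral_union measurableSet_Ioi (Set.Ioc_disjoint_Ioi le_rfl)]
      have : (∫⁻ x in Set.Ioi b, ENNReal.ofReal (s - E x)) = 0 := by
        rw [setLIntegral_congr_fun measurableSet_Ioi
          (fun x (hx : b < x) => ?_), lintegral_zero]
        have hx0 : (0:ℝ) ≤ x := hb0.trans hx.le
        have : s ≤ E x := (galois U hU hm hs hx0).1 hx.le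
        simp [ENNReal.ofReal_eq_zero, sub_nonpos.2 this]
      rw [this, add_zero]
    rw [← l1, hswap, l2]
  -- convert to real integrals
  have hreal1 : (∫ y in (0:ℝ)..s, Q y)
      = (∫⁻ y in Set.Ioc 0 s, ENNReal.ofReal (Qc y)).toReal := by
    rw [intervalIntegral.integral_of_le hs.1]
    rw [setIntegral_congr_fun measurableSet_Ioc
      (fun y (hy : y ∈ Set.Ioc 0 s) => (hQc_eq y ⟨hy.1.le, hy.2.trans hs.2⟩).symm)]
    rw [integral_eq_lintegral_of_nonneg_ae
      (ae_of_all _ (fun y => Uhat_nonneg U m _))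
      hQcmeas.aestronglyMeasurable]
  have hEintb : IntegrableOn E (Set.Ioc 0 b) volume := by
    rw [← intervalIntegrable_iff_integrableOn_Ioc_of_le hb0]
    exact (Ehat_mono U m).intervalIntegrable
  have hreal2 : (∫ x in Set.Ioc 0 b, (s - E x))
      = (∫⁻ x in Set.Ioc 0 b, ENNReal.ofReal (s - E x)).toReal := by
    rw [setIntegral_congr_set MeasureTheory.Ioo_ae_eq_Ioc.symm,
        setLIntegral_congr MeasureTheory.Ioo_ae_eq_Ioc.symm]
    rw [integral_eq_lintegral_of_nonneg_ae]
    · filter_upwards [ae_restrict_mem measurableSet_Ioo] with x hx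
      have hx0 : (0:ℝ) ≤ x := hx.1.le
      have : ¬ (s ≤ E x) := by
        intro hcon
        exact absurd ((galois U hU hm hs hx0).2 hcon) (not_le.2 hx.2)
      simp only [Pi.zero_apply]
      linarith [not_le.1 this]
    · exact (measurable_const.sub hEmeas).aestronglyMeasurable
  have hreal3 : (∫ x in Set.Ioc 0 b, (s - E x)) = s * b - ∫ x in (0:ℝ)..b, E x := by
    rw [integral_sub ((integrableOn_const (C := s) measure_Ioc_lt_top.ne : IntegrableOn (fun _ => s) (Set.Ioc 0 b) volume)) hEintb]
    rw [setIntegral_const, measureReal_def, Real.volume_Ioc, sub_zero, ENNReal.toReal_ofReal hb0,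
      smul_eq_mul, mul_comm, intervalIntegral.integral_of_le hb0]
  rw [hreal1, hstar, ← hreal2, hreal3]

noncomputable def alphaProc (d : ℝ) (U : ℕ → ℝ) (n : ℕ) (y t : ℝ) : ℝ :=
  d⁻¹ * (⌊(n:ℝ)*t⌋₊ : ℝ) * (Ehat U ⌊(n:ℝ)*t⌋₊ y - y)

noncomputable def uProc (d : ℝ) (U : ℕ → ℝ) (n : ℕ) (y t : ℝ) : ℝ :=
  d⁻¹ * (⌊(n:ℝ)*t⌋₊ : ℝ) * (y - Uhat U ⌊(n:ℝ)*t⌋₊ y)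

/-- Sequential uniform Bahadur–Kiefer process `R_n^*(y,t) = d_n(α_n(y,t) − u_n(y,t))`. -/
noncomputable def Rstar (d : ℝ) (U : ℕ → ℝ) (n : ℕ) (y t : ℝ) : ℝ :=
  d * (alphaProc d U n y t - uProc d U n y t)

/-- Sequential uniform Vervaat process `V_n(s,t) = 2 d_n^{-2}[nt] ∫_0^s R_n^*(y,t) dy`. -/
noncomputable def Vver (d : ℝ) (U : ℕ → ℝ) (n : ℕ) (s t : ℝ) : ℝ :=
  2 * (d^2)⁻¹ * (⌊(n:ℝ)*t⌋₊ : ℝ) * ∫ y in (0:ℝ)..s, Rstar d U n y t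

/-- Sequential Vervaat error process `Q_n(s,t) = V_n(s,t) − α_n²(s,t)`. -/
noncomputable def Qver (d : ℝ) (U : ℕ → ℝ) (n : ℕ) (s t : ℝ) : ℝ :=
  Vver d U n s t - (alphaProc d U n s t)^2

/-- The process `A_n(s,t) = 2 d_n^{-1}[nt] ∫_{Û_{[nt]}(s)}^{s} (α_n(y,t) − α_n(s,t)) dy`. -/
noncomputable def Aver (d : ℝ) (U : ℕ → ℝ) (n : ℕ) (s t : ℝ) : ℝ :=
  2 * d⁻¹ * (⌊(n:ℝ)*t⌋₊ : ℝ) *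
    ∫ y in (Uhat U ⌊(n:ℝ)*t⌋₊ s)..s, (alphaProc d U n y t - alphaProc d U n s t)

/-- `Q_n(s,t) = A_n(s,t) − d_n^{-2}(R_n^*(s,t))²`. -/
theorem vervaat_error_identity
    (d : ℝ) (hd : 0 < d) (U : ℕ → ℝ) (hU : ∀ i, U i ∈ Set.Icc (0:ℝ) 1) (n : ℕ)
    (s t : ℝ) (hs : s ∈ Set.Icc (0:ℝ) 1) (ht : t ∈ Set.Icc (0:ℝ) 1) :
    Qver d U n s t = Aver d U n s t - (d^2)⁻¹ * (Rstar d U n s t)^2 := by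
  have hd' : d ≠ 0 := ne_of_gt hd
  set M : ℕ := ⌊(n:ℝ)*t⌋₊ with hM
  rcases Nat.eq_zero_or_pos M with h0 | hpos
  · simp [Qver, Vver, Aver, Rstar, alphaProc, uProc, ← hM, h0]
  · set E := Ehat U M with hE
    set Q := Uhat U M with hQ
    set b := Q s with hb
    have hb0 : 0 ≤ b := Uhat_nonneg U M s
    have hb1 : b ≤ 1 := Uhat_le_one U hU hpos hs.2
    have hyoung := young U hU hpos hs
    rw [← hQ, ← hE, ← hb] at hyoung
    have hEint : ∀ u v : ℝ, IntervalIntegrable E volume u v :=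
      fun u v => (Ehat_mono U M).intervalIntegrable
    have hQint : IntervalIntegrable Q volume 0 s := by
      apply MonotoneOn.intervalIntegrable
      rw [Set.uIcc_of_le hs.1]
      intro u hu v hv huv
      exact Uhat_mono U hU hpos huv (hv.2.trans hs.2)
    have hid : ∀ u v : ℝ, IntervalIntegrable (fun y : ℝ => y) volume u v :=
      fun u v => intervalIntegral.intervalIntegrable_id
    have hRint : (∫ y in (0:ℝ)..s, Rstar d U n y t)
        = (M:ℝ) * (∫ y in (0:ℝ)..s, E y) + (M:ℝ) * (∫ y in (0:ℝ)..s, Q y)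
          - (M:ℝ) * s^2 := by
      have hcg : ∀ y ∈ Set.uIcc (0:ℝ) s, Rstar d U n y t
          = (M:ℝ) * E y + (M:ℝ) * Q y - 2 * (M:ℝ) * y := by
        intro y _
        simp only [Rstar, alphaProc, uProc, ← hM, ← hE, ← hQ]
        field_simp
        ring
      rw [intervalIntegral.integral_congr hcg]
      rw [intervalIntegral.integral_sub (((hEint 0 s).const_mul _).add ((hQint).const_mul _))
        ((hid 0 s).const_mul _)]
      rw [intervalIntegral.integral_add ((hEint 0 s).const_mul _) ((hQint).const_mul _)]
      rw [intervalIntegral.integral_const_mul, intervalIntegral.integral_const_mul,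
        intervalIntegral.integral_const_mul, integral_id]
      ring
    have hAint : (∫ y in b..s, (alphaProc d U n y t - alphaProc d U n s t))
        = d⁻¹ * (M:ℝ) * (((∫ y in (0:ℝ)..s, E y) - (∫ y in (0:ℝ)..b, E y))
            - (s^2/2 - b^2/2) - (s - b) * (E s - s)) := by
      have hcg : ∀ y ∈ Set.uIcc b s, (alphaProc d U n y t - alphaProc d U n s t)
          = d⁻¹ * (M:ℝ) * E y - d⁻¹ * (M:ℝ) * y - d⁻¹ * (M:ℝ) * (E s - s) := by
        intro y _
        simp only [alphaProc, ← hM, ← hE]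
        ring
      rw [intervalIntegral.integral_congr hcg]
      have hEbs : (∫ y in b..s, E y)
          = (∫ y in (0:ℝ)..s, E y) - (∫ y in (0:ℝ)..b, E y) := by
        have := intervalIntegral.integral_add_adjacent_intervals (hEint 0 b) (hEint b s)
        linarith
      rw [intervalIntegral.integral_sub (((hEint b s).const_mul _).sub ((hid b s).const_mul _))
        (intervalIntegrable_const), intervalIntegral.integral_sub ((hEint b s).const_mul _)
        ((hid b s).const_mul _)]
      rw [intervalIntegral.integral_const_mul, intervalIntegral.integral_const_mul,
        integral_id, intervalIntegral.integral_const, hEbs]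
      simp only [smul_eq_mul]
      ring
    have hRs : Rstar d U n s t = (M:ℝ) * (E s - s) - (M:ℝ) * (s - b) := by
      simp only [Rstar, alphaProc, uProc, ← hM, ← hE, ← hQ, ← hb]
      field_simp
    have halpha : alphaProc d U n s t = d⁻¹ * (M:ℝ) * (E s - s) := by
      simp only [alphaProc, ← hM, ← hE]
    simp only [Qver, Vver, Aver, ← hM, ← hE, ← hQ, ← hb]
    rw [hRint, hAint, hRs, halpha, hyoung]
    field_simp
    ring
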